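/- Let F : ℝ^d → ℝ^d be bounded-Lipschitz with constants L, D, and let i be a uniformly random index in {1, ..., d}, independent of z, w. Define the coordinate estimator g = d·[F(z)]_i e_i - d·[F(w)]_i e_i + F(w), where e_i is the i-th standard basis vector. Then E[g] = F(z) (over the randomness of i for fixed z, w) and E‖g - F(w)‖² ≤ d L² E‖z - w‖² + d D². -/

import Mathlib

lemma sum_single_eq {d : ℕ} (v : EuclideanSpace ℝ (Fin d)) :
    ∑ i, EuclideanSpace.single i (v i) = v := by
  apply (WithLp.linearEquiv 2 ℝ (Fin d → ℝ)).injective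
  rw [map_sum]
  simp only [WithLp.linearEquiv_apply, EuclideanSpace.ofLp_single]
  exact Finset.univ_sum_single _

lemma single_sub' {d : ℕ} (i : Fin d) (a b : ℝ) :
    EuclideanSpace.single i (a - b)
      = EuclideanSpace.single i a - EuclideanSpace.single i b := by
  apply (WithLp.linearEquiv 2 ℝ (Fin d → ℝ)).injective
  rw [map_sub]
  simp only [WithLp.linearEquiv_apply, EuclideanSpace.ofLp_single]
  ext j; by_cases h : j = i <;> simp [Pi.single_apply, h]

/-- Lemma 5 bounds for the coordinate estimator: unbiasedness and the
second-moment bound `A = dL²`, `D₁ = dD²`. -/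
theorem stmt_11 {d : ℕ} (hd : 0 < d)
    (F : EuclideanSpace ℝ (Fin d) → EuclideanSpace ℝ (Fin d))
    (L D : ℝ)
    (hF : ∀ z₁ z₂, ‖F z₁ - F z₂‖ ^ 2 ≤ L ^ 2 * ‖z₁ - z₂‖ ^ 2 + D ^ 2)
    (z w : EuclideanSpace ℝ (Fin d))
    (g : Fin d → EuclideanSpace ℝ (Fin d))
    (hg : ∀ i, g i = (d : ℝ) • EuclideanSpace.single i (F z i)
        - (d : ℝ) • EuclideanSpace.single i (F w i) + F w) :
    (d : ℝ)⁻¹ • ∑ i, g i = F z ∧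
    (d : ℝ)⁻¹ * ∑ i, ‖g i - F w‖ ^ 2 ≤ d * L ^ 2 * ‖z - w‖ ^ 2 + d * D ^ 2 := by
  have hd' : (d : ℝ) ≠ 0 := Nat.cast_ne_zero.mpr hd.ne'
  constructor
  · have : ∑ i, g i = (d : ℝ) • F z := by
      simp only [hg, Finset.sum_add_distrib, Finset.sum_sub_distrib, ← Finset.smul_sum,
        sum_single_eq, Finset.sum_const, Finset.card_univ, Fintype.card_fin]
      module
    rw [this, smul_smul, inv_mul_cancel₀ hd', one_smul]
  · have hgi : ∀ i, ‖g i - F w‖ ^ 2 = (d : ℝ) ^ 2 * ‖F z i - F w i‖ ^ 2 := by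
      intro i
      have : g i - F w = (d : ℝ) • EuclideanSpace.single i (F z i - F w i) := by
        rw [hg i, single_sub']; module
      rw [this, norm_smul, mul_pow, EuclideanSpace.norm_single]
      simp [sq_abs]
    have hsum : ∑ i, ‖g i - F w‖ ^ 2 = (d : ℝ) ^ 2 * ‖F z - F w‖ ^ 2 := by
      simp only [hgi, ← Finset.mul_sum]
      congr 1
      rw [EuclideanSpace.norm_eq, Real.sq_sqrt (by positivity)]
      rfl
    rw [hsum, ← mul_assoc]
    have : (d : ℝ)⁻¹ * (d : ℝ) ^ 2 = d := by field_simp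
    rw [this]
    calc (d : ℝ) * ‖F z - F w‖ ^ 2 ≤ (d : ℝ) * (L ^ 2 * ‖z - w‖ ^ 2 + D ^ 2) := by
          apply mul_le_mul_of_nonneg_left (hF z w) (by positivity)
      _ = d * L ^ 2 * ‖z - w‖ ^ 2 + d * D ^ 2 := by ring
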